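/- arXiv:0909.1792 — 4 statements merged into one kernel-verified Lean document; each statement's English description precedes it below -/
import Mathlib

section
/- Let u > 0 be a real number and let n_0, n be integers with 1 ≤ n_0 ≤ n. In a homogeneous system with common bandwidth u, the one-to-one single-chunk delay is D_1(n) = (1/u)·⌈log_2(n/n_0)⌉ and the many-to-one delay is D_m(n) = (1/u)·Σ_{k=n_0}^{n-1} 1/k; they satisfy D_m(n) ≤ D_1(n) < 1/u + D_m(n)/ln(2), i.e. (1/u)·Σ_{k=n_0}^{n-1} 1/k ≤ (1/u)·⌈log_2(n/n_0)⌉ < 1/u + (1/(u·ln 2))·Σ_{k=n_0}^{n-1} 1/k. -/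
private lemma log_sub_le_sum (n0 : ℕ) (hn0 : 1 ≤ n0) :
    ∀ n, n0 ≤ n →
      Real.log n - Real.log n0 ≤ ∑ k ∈ Finset.Ico n0 n, (1 : ℝ) / (k : ℝ) := by
  intro n hn
  induction n with
  | zero => omega
  | succ m ih =>
    rcases Nat.lt_or_ge n0 (m+1) with h | h
    · have hm : n0 ≤ m := by omega
      have hm1 : 1 ≤ m := by omega
      have hmpos : (0:ℝ) < m := by exact_mod_cast hm1
      rw [Finset.sum_Ico_succ_top hm]
      have hlog : Real.log ((m+1:ℕ):ℝ) - Real.log m ≤ 1 / (m:ℝ) := by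
        rw [← Real.log_div (by push_cast; positivity) (ne_of_gt hmpos)]
        have h1 : ((m+1:ℕ):ℝ) / m = 1 + 1/m := by
          field_simp
          push_cast; ring
        calc Real.log (((m+1:ℕ):ℝ) / m) ≤ ((m+1:ℕ):ℝ) / m - 1 :=
              Real.log_le_sub_one_of_pos (by positivity)
          _ = 1 / m := by rw [h1]; ring
      have := ih hm
      linarith
    · have : n0 = m + 1 := by omega
      subst this
      simp
private lemma doubling_sum_le_one (m : ℕ) (hm : 1 ≤ m) :
    ∑ k ∈ Finset.Ico m (2*m), (1 : ℝ) / (k : ℝ) ≤ 1 := by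
  have hmpos : (0:ℝ) < m := by positivity
  calc ∑ k ∈ Finset.Ico m (2*m), (1 : ℝ) / (k : ℝ)
      ≤ ∑ k ∈ Finset.Ico m (2*m), (1 : ℝ) / (m : ℝ) := by
        apply Finset.sum_le_sum
        intro k hk
        have hk1 : m ≤ k := (Finset.mem_Ico.mp hk).1
        have : (m:ℝ) ≤ k := by exact_mod_cast hk1
        apply div_le_div_of_nonneg_left (by norm_num) hmpos this
    _ = ((2*m - m : ℕ):ℝ) * (1/(m:ℝ)) := by
        rw [Finset.sum_const, Nat.card_Ico]; simp [nsmul_eq_mul]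
    _ = 1 := by
        have h : 2*m - m = m := by omega
        rw [h]; field_simp

private lemma sum_pow_le (n0 : ℕ) (hn0 : 1 ≤ n0) :
    ∀ c : ℕ, ∑ k ∈ Finset.Ico n0 (n0 * 2^c), (1 : ℝ) / (k : ℝ) ≤ c := by
  intro c
  induction c with
  | zero => simp
  | succ d ih =>
    have h1 : n0 ≤ n0 * 2^d := Nat.le_mul_of_pos_right _ (Nat.pow_pos (by norm_num))
    have h2 : n0 * 2^d ≤ n0 * 2^(d+1) := by
      apply Nat.mul_le_mul_left
      exact Nat.pow_le_pow_right (by norm_num) (by omega)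
    rw [← Finset.sum_Ico_consecutive _ h1 h2]
    have h3 : n0 * 2^(d+1) = 2 * (n0 * 2^d) := by ring
    have h4 := doubling_sum_le_one (n0 * 2^d) (Nat.mul_pos (by omega) (Nat.pow_pos (by norm_num)))
    rw [h3]
    push_cast
    linarith

/-- Conjecture 1 of the paper in the homogeneous case: with common bandwidth
`u > 0` and `1 ≤ n0 ≤ n`, the one-to-one delay `D_1(n) = (1/u)·⌈log₂(n/n0)⌉`
and the many-to-one delay `D_m(n) = (1/u)·∑_{k=n0}^{n-1} 1/k` satisfy
`D_m(n) ≤ D_1(n) < 1/u + D_m(n)/ln 2`. -/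
theorem homogeneous_one_to_one_delay_bounds
    (u : ℝ) (hu : 0 < u) (n0 n : ℕ) (hn0 : 1 ≤ n0) (hn0n : n0 ≤ n) :
    (1 / u) * (∑ k ∈ Finset.Ico n0 n, (1 : ℝ) / (k : ℝ)) ≤
      (1 / u) * (⌈Real.logb 2 ((n : ℝ) / (n0 : ℝ))⌉ : ℝ) ∧
    (1 / u) * (⌈Real.logb 2 ((n : ℝ) / (n0 : ℝ))⌉ : ℝ) <
      1 / u + (1 / (u * Real.log 2)) * (∑ k ∈ Finset.Ico n0 n, (1 : ℝ) / (k : ℝ)) := by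
  have hn0pos : (0:ℝ) < n0 := by positivity
  have hnpos : (0:ℝ) < n := by
    have : 1 ≤ n := le_trans hn0 hn0n
    positivity
  have hlog2 : (0:ℝ) < Real.log 2 := Real.log_pos (by norm_num)
  have hratio : (1:ℝ) ≤ (n:ℝ)/(n0:ℝ) := by
    rw [le_div_iff₀ hn0pos]; simp; exact_mod_cast hn0n
  set x := Real.logb 2 ((n:ℝ)/(n0:ℝ)) with hx
  have hxnn : 0 ≤ x := Real.logb_nonneg (by norm_num) hratio
  have hceil : 0 ≤ ⌈x⌉ := Int.ceil_nonneg hxnn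
  -- key lower bound: log(n/n0) ≤ sum
  have hlower : Real.log ((n:ℝ)/(n0:ℝ)) ≤ ∑ k ∈ Finset.Ico n0 n, (1:ℝ)/(k:ℝ) := by
    rw [Real.log_div (ne_of_gt hnpos) (ne_of_gt hn0pos)]
    exact log_sub_le_sum n0 hn0 n hn0n
  constructor
  · -- D_m ≤ D_1
    apply mul_le_mul_of_nonneg_left _ (by positivity)
    set c : ℕ := ⌈x⌉.toNat with hc
    have hcx : x ≤ (c:ℝ) := by
      have : x ≤ (⌈x⌉:ℝ) := Int.le_ceil x
      have h2 : ((⌈x⌉:ℤ):ℝ) = (c:ℝ) := by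
        rw [hc]; exact_mod_cast (Int.toNat_of_nonneg hceil).symm
      linarith [h2 ▸ this]
    -- n ≤ n0 * 2^c
    have hnle : n ≤ n0 * 2^c := by
      have h2c : (n:ℝ)/(n0:ℝ) ≤ (2:ℝ)^(c:ℝ) := by
        calc (n:ℝ)/(n0:ℝ) = (2:ℝ)^x := by
              rw [hx, Real.rpow_logb (by norm_num) (by norm_num) (by positivity)]
          _ ≤ (2:ℝ)^(c:ℝ) := Real.rpow_le_rpow_of_exponent_le (by norm_num) hcx
      have : (n:ℝ) ≤ (n0:ℝ) * 2^(c:ℕ) := by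
        rw [div_le_iff₀ hn0pos] at h2c
        rw [← Real.rpow_natCast (2:ℝ) c]
        linarith
      exact_mod_cast this
    calc ∑ k ∈ Finset.Ico n0 n, (1:ℝ)/(k:ℝ)
        ≤ ∑ k ∈ Finset.Ico n0 (n0 * 2^c), (1:ℝ)/(k:ℝ) := by
          apply Finset.sum_le_sum_of_subset_of_nonneg
          · exact Finset.Ico_subset_Ico le_rfl hnle
          · intro k _ _; positivity
      _ ≤ (c:ℝ) := sum_pow_le n0 hn0 c
      _ ≤ (⌈x⌉:ℝ) := by
          have hcast : ((c:ℕ):ℝ) = ((⌈x⌉:ℤ):ℝ) := by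
            rw [hc]; exact_mod_cast Int.toNat_of_nonneg hceil
          rw [hcast]
  · -- D_1 < 1/u + D_m / ln 2
    have hceillt : (⌈x⌉:ℝ) < x + 1 := Int.ceil_lt_add_one x
    have hxle : x ≤ (∑ k ∈ Finset.Ico n0 n, (1:ℝ)/(k:ℝ)) / Real.log 2 := by
      rw [hx, Real.logb, div_le_div_iff₀ hlog2 hlog2]
      have := hlower
      nlinarith
    have hsum : (⌈x⌉:ℝ) < 1 + (∑ k ∈ Finset.Ico n0 n, (1:ℝ)/(k:ℝ)) / Real.log 2 := by
      linarith
    have h1u : (0:ℝ) < 1/u := by positivity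
    calc (1/u) * (⌈x⌉:ℝ) < (1/u) * (1 + (∑ k ∈ Finset.Ico n0 n, (1:ℝ)/(k:ℝ)) / Real.log 2) :=
          (mul_lt_mul_iff_right₀ h1u).mpr hsum
      _ = 1/u + (1/(u * Real.log 2)) * (∑ k ∈ Finset.Ico n0 n, (1:ℝ)/(k:ℝ)) := by
          field_simp
end

section
/- Let u > 0 be a real number, c ≥ 1 an integer, and n_0, n integers with 1 ≤ n_0 ≤ n. In a homogeneous system with common bandwidth u, the one-to-c single-chunk delay is D_c(n) = (c/u)·⌈log_{1+c}(n/n_0)⌉ and the many-to-one delay is D_m(n) = (1/u)·Σ_{k=n_0}^{n-1} 1/k; they satisfy D_m(n) ≤ D_c(n) < c/u + (c/ln(1+c))·D_m(n), i.e. (1/u)·Σ_{k=n_0}^{n-1} 1/k ≤ (c/u)·⌈log_{1+c}(n/n_0)⌉ < c/u + (c/(u·ln(1+c)))·Σ_{k=n_0}^{n-1} 1/k. -/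
lemma harmonic_ge_log (n0 : ℕ) (h1 : 1 ≤ n0) : ∀ n, n0 ≤ n →
    Real.log ((n : ℝ) / (n0 : ℝ)) ≤ ∑ k ∈ Finset.Ico n0 n, (1 : ℝ) / (k : ℝ) := by
  intro n
  induction n with
  | zero => intro h; omega
  | succ n ih =>
    intro h
    have hn0pos : (0 : ℝ) < (n0 : ℝ) := by exact_mod_cast h1
    rcases Nat.lt_or_ge n n0 with hlt | hge
    · have : n0 = n + 1 := by omega
      subst this
      rw [Finset.Ico_self, Finset.sum_empty]
      push_cast
      rw [div_self (by positivity), Real.log_one]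
    · have hsum := ih hge
      have hnpos : (0 : ℝ) < (n : ℝ) := by
        have : 1 ≤ n := le_trans h1 hge
        exact_mod_cast this
      rw [Finset.sum_Ico_succ_top hge]
      have key : Real.log ((n : ℝ) + 1) - Real.log (n : ℝ) ≤ 1 / (n : ℝ) := by
        rw [← Real.log_div (by positivity) (ne_of_gt hnpos)]
        have h2 := Real.log_le_sub_one_of_pos
          (show (0 : ℝ) < ((n : ℝ) + 1) / (n : ℝ) by positivity)
        have : ((n : ℝ) + 1) / (n : ℝ) - 1 = 1 / (n : ℝ) := by field_simp; ring
        linarith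
      have e1 : Real.log (((n + 1 : ℕ) : ℝ) / (n0 : ℝ))
          = Real.log ((n : ℝ) + 1) - Real.log (n0 : ℝ) := by
        push_cast
        rw [Real.log_div (by positivity) (ne_of_gt hn0pos)]
      have e2 : Real.log ((n : ℝ) / (n0 : ℝ))
          = Real.log (n : ℝ) - Real.log (n0 : ℝ) := by
        rw [Real.log_div (ne_of_gt hnpos) (ne_of_gt hn0pos)]
      rw [e1]
      rw [e2] at hsum
      linarith

lemma sum_le_c_mul_ceil (c : ℕ) (hc : 1 ≤ c) :
    ∀ m n0 n : ℕ, 1 ≤ n0 → n0 ≤ n → n - n0 ≤ m →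
    (∑ k ∈ Finset.Ico n0 n, (1 : ℝ) / (k : ℝ)) ≤
      (c : ℝ) * (⌈Real.logb (1 + (c : ℝ)) ((n : ℝ) / (n0 : ℝ))⌉ : ℝ) := by
  intro m
  induction m with
  | zero =>
    intro n0 n h1 h2 h3
    have : n = n0 := by omega
    subst this
    have hnpos : (0 : ℝ) < (n : ℝ) := by exact_mod_cast h1
    simp [div_self (ne_of_gt hnpos)]
  | succ m ih =>
    intro n0 n h1 h2 h3
    have hcR : (1 : ℝ) ≤ (c : ℝ) := by exact_mod_cast hc
    have hb : (1 : ℝ) < 1 + (c : ℝ) := by linarith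
    have hn0pos : (0 : ℝ) < (n0 : ℝ) := by exact_mod_cast h1
    -- generic block estimate
    have block : ∀ a b : ℕ, n0 ≤ a → a ≤ b →
        (∑ k ∈ Finset.Ico a b, (1 : ℝ) / (k : ℝ)) ≤ ((b - a : ℕ) : ℝ) / (a : ℝ) := by
      intro a b ha hab
      have hapos : (0 : ℝ) < (a : ℝ) := by
        have : 1 ≤ a := le_trans h1 ha
        exact_mod_cast this
      have := Finset.sum_le_card_nsmul (Finset.Ico a b) (fun k => (1 : ℝ) / (k : ℝ))
        ((1 : ℝ) / (a : ℝ)) (by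
          intro k hk
          have hk' := (Finset.mem_Ico.mp hk).1
          have hkpos : (0 : ℝ) < (k : ℝ) := by
            have : 1 ≤ k := le_trans (le_trans h1 ha) hk'
            exact_mod_cast this
          exact one_div_le_one_div_of_le hapos (by exact_mod_cast hk'))
      rw [Nat.card_Ico] at this
      calc (∑ k ∈ Finset.Ico a b, (1 : ℝ) / (k : ℝ))
          ≤ (b - a) • ((1 : ℝ) / (a : ℝ)) := this
        _ = ((b - a : ℕ) : ℝ) / (a : ℝ) := by
            rw [nsmul_eq_mul]; ring
    by_cases hsmall : n ≤ n0 * (c + 1)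
    · rcases eq_or_lt_of_le h2 with heq | hlt
      · subst heq
        simp [div_self (ne_of_gt hn0pos)]
      · have hceil : (1 : ℤ) ≤ ⌈Real.logb (1 + (c : ℝ)) ((n : ℝ) / (n0 : ℝ))⌉ := by
          have hgt : (1 : ℝ) < (n : ℝ) / (n0 : ℝ) := by
            rw [lt_div_iff₀ hn0pos]
            have : (n0 : ℝ) < (n : ℝ) := by exact_mod_cast hlt
            linarith
          exact Int.ceil_pos.mpr (Real.logb_pos hb hgt)
        have hsum : (∑ k ∈ Finset.Ico n0 n, (1 : ℝ) / (k : ℝ)) ≤ (c : ℝ) := by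
          have hB := block n0 n (le_refl n0) h2
          have : ((n - n0 : ℕ) : ℝ) / (n0 : ℝ) ≤ (c : ℝ) := by
            rw [div_le_iff₀ hn0pos]
            have h4 : n - n0 ≤ c * n0 := by
              have he : n0 * (c + 1) = c * n0 + n0 := by ring
              omega
            calc ((n - n0 : ℕ) : ℝ) ≤ ((c * n0 : ℕ) : ℝ) := by exact_mod_cast h4
              _ = (c : ℝ) * (n0 : ℝ) := by push_cast; ring
          linarith
        calc (∑ k ∈ Finset.Ico n0 n, (1 : ℝ) / (k : ℝ)) ≤ (c : ℝ) := hsum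
          _ = (c : ℝ) * 1 := by ring
          _ ≤ (c : ℝ) * (⌈Real.logb (1 + (c : ℝ)) ((n : ℝ) / (n0 : ℝ))⌉ : ℝ) := by
              apply mul_le_mul_of_nonneg_left _ (by linarith)
              exact_mod_cast hceil
    · push_neg at hsmall
      set n1 := n0 * (c + 1) with hn1
      have h01 : n0 ≤ n1 := by
        have he : n0 * (c + 1) = c * n0 + n0 := by ring
        omega
      have h1n : n1 ≤ n := le_of_lt hsmall
      have hn1pos : (0 : ℝ) < (n1 : ℝ) := by
        have : 1 ≤ n1 := le_trans h1 h01
        exact_mod_cast this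
      have hnpos : (0 : ℝ) < (n : ℝ) := lt_trans hn1pos (by exact_mod_cast hsmall)
      rw [← Finset.sum_Ico_consecutive _ h01 h1n]
      have hA : (∑ k ∈ Finset.Ico n0 n1, (1 : ℝ) / (k : ℝ)) ≤ (c : ℝ) := by
        have hB := block n0 n1 (le_refl n0) h01
        have hcard : n1 - n0 = c * n0 := by
          rw [hn1]; ring_nf; omega
        rw [hcard] at hB
        have : ((c * n0 : ℕ) : ℝ) / (n0 : ℝ) = (c : ℝ) := by
          push_cast; field_simp
        linarith [hB, this.le, this.ge]
      have hB := ih n1 n (le_trans h1 h01) h1n (by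
        have hge : n0 + 1 ≤ n1 := by
          rw [hn1]; nlinarith [h1, hc]
        omega)
      have hrw : (n : ℝ) / (n1 : ℝ) = ((n : ℝ) / (n0 : ℝ)) / (1 + (c : ℝ)) := by
        have he : (n1 : ℝ) = (n0 : ℝ) * (1 + (c : ℝ)) := by rw [hn1]; push_cast; ring
        rw [he, div_div]
      have hlog : Real.logb (1 + (c : ℝ)) ((n : ℝ) / (n1 : ℝ))
          = Real.logb (1 + (c : ℝ)) ((n : ℝ) / (n0 : ℝ)) - 1 := by
        rw [hrw, Real.logb_div (by positivity) (by linarith),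
          Real.logb_self_eq_one hb]
      rw [hlog] at hB
      have hceil : ⌈Real.logb (1 + (c : ℝ)) ((n : ℝ) / (n0 : ℝ)) - 1⌉
          = ⌈Real.logb (1 + (c : ℝ)) ((n : ℝ) / (n0 : ℝ))⌉ - 1 := by
        exact_mod_cast Int.ceil_sub_intCast (Real.logb (1 + (c : ℝ)) ((n : ℝ) / (n0 : ℝ))) 1
      rw [hceil] at hB
      push_cast at hB ⊢
      linarith

/-- Conjecture 2 of the paper in the homogeneous case: with common bandwidth
`u > 0`, parallelism degree `c ≥ 1`, and `1 ≤ n0 ≤ n`, the one-to-`c` delay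
`D_c(n) = (c/u)·⌈log_{1+c}(n/n0)⌉` and the many-to-one delay
`D_m(n) = (1/u)·∑_{k=n0}^{n-1} 1/k` satisfy
`D_m(n) ≤ D_c(n) < c/u + (c/ln(1+c))·D_m(n)`. -/
theorem homogeneous_one_to_c_delay_bounds
    (u : ℝ) (hu : 0 < u) (c : ℕ) (hc : 1 ≤ c)
    (n0 n : ℕ) (hn0 : 1 ≤ n0) (hn0n : n0 ≤ n) :
    (1 / u) * (∑ k ∈ Finset.Ico n0 n, (1 : ℝ) / (k : ℝ)) ≤
      ((c : ℝ) / u) * (⌈Real.logb (1 + (c : ℝ)) ((n : ℝ) / (n0 : ℝ))⌉ : ℝ) ∧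
    ((c : ℝ) / u) * (⌈Real.logb (1 + (c : ℝ)) ((n : ℝ) / (n0 : ℝ))⌉ : ℝ) <
      (c : ℝ) / u + ((c : ℝ) / (u * Real.log (1 + (c : ℝ)))) *
        (∑ k ∈ Finset.Ico n0 n, (1 : ℝ) / (k : ℝ)) := by
  have hcR : (1 : ℝ) ≤ (c : ℝ) := by exact_mod_cast hc
  have hb : (1 : ℝ) < 1 + (c : ℝ) := by linarith
  have hlogpos : 0 < Real.log (1 + (c : ℝ)) := Real.log_pos hb
  set S := ∑ k ∈ Finset.Ico n0 n, (1 : ℝ) / (k : ℝ) with hS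
  set L := Real.logb (1 + (c : ℝ)) ((n : ℝ) / (n0 : ℝ)) with hL
  have hlower : S ≤ (c : ℝ) * (⌈L⌉ : ℝ) :=
    sum_le_c_mul_ceil c hc (n - n0) n0 n hn0 hn0n (le_refl _)
  have hlog_le : Real.log ((n : ℝ) / (n0 : ℝ)) ≤ S := harmonic_ge_log n0 hn0 n hn0n
  constructor
  · calc (1 / u) * S = S / u := by ring
      _ ≤ ((c : ℝ) * (⌈L⌉ : ℝ)) / u := by gcongr
      _ = ((c : ℝ) / u) * (⌈L⌉ : ℝ) := by ring
  · have hceil_lt : (⌈L⌉ : ℝ) < L + 1 := Int.ceil_lt_add_one L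
    have hcu : 0 < (c : ℝ) / u := by positivity
    have step1 : ((c : ℝ) / u) * (⌈L⌉ : ℝ) < ((c : ℝ) / u) * (L + 1) :=
      mul_lt_mul_of_pos_left hceil_lt hcu
    have hLval : L = Real.log ((n : ℝ) / (n0 : ℝ)) / Real.log (1 + (c : ℝ)) := by
      rw [hL, Real.logb]
    have step2 : ((c : ℝ) / u) * L ≤ ((c : ℝ) / (u * Real.log (1 + (c : ℝ)))) * S := by
      have he : ((c : ℝ) / u) * L
          = ((c : ℝ) / (u * Real.log (1 + (c : ℝ)))) * Real.log ((n : ℝ) / (n0 : ℝ)) := by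
        rw [hLval]; field_simp
      rw [he]
      exact mul_le_mul_of_nonneg_left hlog_le (by positivity)
    have he2 : ((c : ℝ) / u) * (L + 1) = ((c : ℝ) / u) * L + (c : ℝ) / u := by ring
    rw [he2] at step1
    linarith
end

section
/- Let u_1 ≥ u_2 ≥ ... ≥ u_N ≥ 0 be real numbers, let U_k = Σ_{i=1}^k u_i (with U_0 = 0), and let E, g be integers with 1 ≤ g ≤ E ≤ N. Then the total bandwidth of the peer group G_g = { i : 1 ≤ i ≤ N, i ≡ g (mod E) } satisfies Σ_{i ∈ G_g} u_i ≥ U_N/E − U_{E-1}. -/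
/-- Group bandwidth lower bound used in Theorem 5 of the paper: for a
nonincreasing bandwidth sequence `u_1 ≥ ... ≥ u_N ≥ 0` with cumulative sums
`U_k = ∑_{i=1}^k u_i` and `1 ≤ g ≤ E ≤ N`, the group
`G_g = {i : 1 ≤ i ≤ N, i ≡ g (mod E)}` satisfies
`∑_{i ∈ G_g} u_i ≥ U_N/E − U_{E-1}`. -/
theorem group_bandwidth_ge_average_minus_prefix
    (N : ℕ) (u : ℕ → ℝ)
    (hmono : ∀ i j, 1 ≤ i → i ≤ j → j ≤ N → u j ≤ u i)
    (hnonneg : ∀ i, 1 ≤ i → i ≤ N → 0 ≤ u i)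
    (E g : ℕ) (hg : 1 ≤ g) (hgE : g ≤ E) (hEN : E ≤ N) :
    (∑ i ∈ Finset.Icc 1 N, u i) / (E : ℝ) - (∑ i ∈ Finset.Icc 1 (E - 1), u i) ≤
      ∑ i ∈ (Finset.Icc 1 N).filter (fun i => i % E = g % E), u i := by
  have hE1 : (1:ℕ) ≤ E := le_trans hg hgE
  have hEpos : 0 < E := hE1
  set Gg := (Finset.Icc 1 N).filter (fun i => i % E = g % E) with hGg
  set r : ℕ → ℕ := fun j => g + E * ((j - g) / E) with hr
  have hrle : ∀ j, g ≤ j → r j ≤ j ∧ j < r j + E := by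
    intro j hj
    have h1 := Nat.div_add_mod (j - g) E
    have h2 := Nat.mod_lt (j - g) hEpos
    constructor <;> simp only [hr] <;> omega
  have hmaps : ∀ j ∈ Finset.Icc g N, r j ∈ Gg := by
    intro j hj
    rw [Finset.mem_Icc] at hj
    have h := hrle j hj.1
    rw [hGg, Finset.mem_filter, Finset.mem_Icc]
    refine ⟨⟨?_, le_trans h.1 hj.2⟩, ?_⟩
    · simp only [hr]; omega
    · simp only [hr]
      exact Nat.add_mul_mod_self_left g E _
  have hsplit : ∑ j ∈ Finset.Icc g N, u j
      = ∑ i ∈ Gg, ∑ j ∈ (Finset.Icc g N).filter (fun j => r j = i), u j :=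
    (Finset.sum_fiberwise_of_maps_to hmaps u).symm
  have hfib : ∀ i ∈ Gg, ∑ j ∈ (Finset.Icc g N).filter (fun j => r j = i), u j
      ≤ (E : ℝ) * u i := by
    intro i hi
    rw [hGg, Finset.mem_filter, Finset.mem_Icc] at hi
    have hsub : (Finset.Icc g N).filter (fun j => r j = i) ⊆ Finset.Icc i (i + E - 1) := by
      intro j hj
      rw [Finset.mem_filter, Finset.mem_Icc] at hj
      rw [Finset.mem_Icc]
      have h := hrle j hj.1.1
      omega
    have hcard : ((Finset.Icc g N).filter (fun j => r j = i)).card ≤ E := by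
      have := Finset.card_le_card hsub
      rw [Nat.card_Icc] at this
      omega
    calc ∑ j ∈ (Finset.Icc g N).filter (fun j => r j = i), u j
        ≤ ∑ j ∈ (Finset.Icc g N).filter (fun j => r j = i), u i := by
          refine Finset.sum_le_sum (fun j hj => ?_)
          rw [Finset.mem_filter, Finset.mem_Icc] at hj
          have h := hrle j hj.1.1
          exact hmono i j hi.1.1 (by omega) hj.1.2
      _ = (((Finset.Icc g N).filter (fun j => r j = i)).card : ℝ) * u i := by
          rw [Finset.sum_const, nsmul_eq_mul]
      _ ≤ (E : ℝ) * u i := by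
          have hu : 0 ≤ u i := hnonneg i hi.1.1 hi.1.2
          exact mul_le_mul_of_nonneg_right (by exact_mod_cast hcard) hu
  have hT : ∑ j ∈ Finset.Icc g N, u j ≤ (E : ℝ) * ∑ i ∈ Gg, u i := by
    rw [hsplit, Finset.mul_sum]
    exact Finset.sum_le_sum hfib
  have hUsplit : ∑ i ∈ Finset.Icc 1 N, u i
      = (∑ i ∈ Finset.Icc 1 (g - 1), u i) + ∑ j ∈ Finset.Icc g N, u j := by
    have h1 : Finset.Icc 1 (g-1) = Finset.Ioc 0 (g-1) := by
      rw [← Finset.Icc_add_one_left_eq_Ioc]; rfl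
    have h2 : Finset.Icc g N = Finset.Ioc (g-1) N := by
      rw [← Finset.Icc_add_one_left_eq_Ioc]; congr 1; omega
    have h3 : Finset.Icc 1 N = Finset.Ioc 0 N := by
      rw [← Finset.Icc_add_one_left_eq_Ioc]; rfl
    rw [h1, h2, h3]
    exact (Finset.sum_Ioc_consecutive u (Nat.zero_le _) (by omega)).symm
  have hpref : ∑ i ∈ Finset.Icc 1 (g - 1), u i ≤ ∑ i ∈ Finset.Icc 1 (E - 1), u i := by
    refine Finset.sum_le_sum_of_subset_of_nonneg (Finset.Icc_subset_Icc_right (by omega)) ?_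
    intro i hi _
    rw [Finset.mem_Icc] at hi
    exact hnonneg i hi.1 (by omega)
  have hprefnn : 0 ≤ ∑ i ∈ Finset.Icc 1 (E - 1), u i := by
    refine Finset.sum_nonneg (fun i hi => ?_)
    rw [Finset.mem_Icc] at hi
    exact hnonneg i hi.1 (by omega)
  have hEr : (1:ℝ) ≤ (E:ℝ) := by exact_mod_cast hE1
  rw [sub_le_iff_le_add, div_le_iff₀ (by linarith : (0:ℝ) < E)]
  nlinarith [hT, hUsplit, hpref, hprefnn]
end

section
/- Let n_0 ≥ 1 be an integer, V ≥ 0 and s > 0 real numbers, and N an integer with N > n_0 + 1 and (N - n_0 - 1)·(N - 1) ≥ n_0 + V + 1. Define the bandwidth sequence u_1 = (N - n_0 - 1)·s and u_i = (n_0 + V + 1)·s/(N - 1) for 2 ≤ i ≤ N. Then: (i) the sequence is nonincreasing (u_1 ≥ u_2 = ... = u_N > 0); (ii) Σ_{i=1}^N u_i = (N + V)·s, so the system is feasible with excess peer bandwidth V·s over the stream rate requirement N·s; (iii) n_0·s + u_1 = (N - 1)·s < N·s, so the source (of capacity n_0 chunks per second) together with peer 1 alone cannot sustain the stream; and (iv)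 for every i with 2 ≤ i ≤ N, the time 1/u_i for peer i to transmit one chunk equals (N - 1)/((n_0 + V + 1)·s), which grows linearly in N. -/
/-- Explicit witness construction in the proof of Theorem 4 of the paper:
with `u 1 = (N - n0 - 1)·s` and `u i = (n0 + V + 1)·s/(N - 1)` for
`2 ≤ i ≤ N`, (i) the sequence is nonincreasing and positive beyond the first
peer, (ii) `∑ u_i = (N + V)·s` (feasible with excess bandwidth `V·s`),
(iii) `n0·s + u 1 = (N - 1)·s < N·s` (source plus peer 1 cannot sustain the
stream), and (iv) each peer `i ≥ 2` needs `1/u_i = (N-1)/((n0+V+1)·s)`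
seconds per chunk, which is linear in `N`. -/
theorem heterogeneity_curse_witness
    (n0 : ℕ) (hn0 : 1 ≤ n0) (V s : ℝ) (hV : 0 ≤ V) (hs : 0 < s)
    (N : ℕ) (hN : n0 + 1 < N)
    (hbig : ((n0 : ℝ) + V + 1) ≤ ((N : ℝ) - (n0 : ℝ) - 1) * ((N : ℝ) - 1))
    (u : ℕ → ℝ)
    (hu1 : u 1 = ((N : ℝ) - (n0 : ℝ) - 1) * s)
    (hui : ∀ i, 2 ≤ i → i ≤ N → u i = ((n0 : ℝ) + V + 1) * s / ((N : ℝ) - 1)) :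
    ((∀ i j, 1 ≤ i → i ≤ j → j ≤ N → u j ≤ u i) ∧
      (∀ i, 2 ≤ i → i ≤ N → 0 < u i)) ∧
    (∑ i ∈ Finset.Icc 1 N, u i) = ((N : ℝ) + V) * s ∧
    ((n0 : ℝ) * s + u 1 = ((N : ℝ) - 1) * s ∧ ((N : ℝ) - 1) * s < (N : ℝ) * s) ∧
    (∀ i, 2 ≤ i → i ≤ N → 1 / u i = ((N : ℝ) - 1) / (((n0 : ℝ) + V + 1) * s)) := by
  have hN3 : 3 ≤ N := by omega
  have hNR : (1:ℝ) < (N:ℝ) := by exact_mod_cast (by omega : 1 < N)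
  have hNm1 : (0:ℝ) < (N:ℝ) - 1 := by linarith
  have hnum : (0:ℝ) < (n0:ℝ) + V + 1 := by
    have : (1:ℝ) ≤ (n0:ℝ) := by exact_mod_cast hn0
    linarith
  have hn0N : ((n0:ℝ)) + 1 < (N:ℝ) := by exact_mod_cast hN
  have hc : (0:ℝ) < ((n0:ℝ) + V + 1) * s / ((N:ℝ) - 1) :=
    div_pos (mul_pos hnum hs) hNm1
  have hle : ((n0:ℝ) + V + 1) * s / ((N:ℝ) - 1) ≤ ((N:ℝ) - (n0:ℝ) - 1) * s := by
    rw [div_le_iff₀ hNm1]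
    have := mul_le_mul_of_nonneg_right hbig hs.le
    nlinarith
  refine ⟨⟨?_, ?_⟩, ?_, ⟨by rw [hu1]; ring, by nlinarith⟩, ?_⟩
  · intro i j hi hij hjN
    rcases eq_or_lt_of_le hi with h1 | h1
    · rcases eq_or_lt_of_le hij with h2 | h2
      · rw [← h2]
      · rw [hui j (by omega) hjN, ← h1, hu1]; exact hle
    · rw [hui j (by omega) hjN, hui i (by omega) (by omega)]
  · intro i h2 hiN; rw [hui i h2 hiN]; exact hc
  · have hsplit : Finset.Icc 1 N = insert 1 (Finset.Icc 2 N) := by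
      ext x; simp [Finset.mem_Icc, Finset.mem_insert]; omega
    rw [hsplit, Finset.sum_insert (by simp [Finset.mem_Icc])]
    have : ∑ i ∈ Finset.Icc 2 N, u i
        = ∑ i ∈ Finset.Icc 2 N, ((n0:ℝ) + V + 1) * s / ((N:ℝ) - 1) := by
      apply Finset.sum_congr rfl
      intro i hi
      simp only [Finset.mem_Icc] at hi
      exact hui i hi.1 hi.2
    rw [this, Finset.sum_const, Nat.card_Icc]
    have hcard : ((N + 1 - 2 : ℕ) : ℝ) = (N:ℝ) - 1 := by
      have : N + 1 - 2 = N - 1 := by omega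
      rw [this]; push_cast [Nat.cast_sub (by omega : 1 ≤ N)]; ring
    rw [hu1, nsmul_eq_mul, hcard]
    field_simp
    ring
  · intro i h2 hiN
    rw [hui i h2 hiN, one_div, inv_div]
end
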